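/- Let n ≥ 5 and G = K₂ ∨ (K_{n−4} + 2K₁) (a graph on n vertices). Then ρ_D(G) > (2n² + 6n − 28)/n. -/

import Mathlib

open SimpleGraph Finset

/-- The transmission of a vertex: sum of distances to all other vertices. -/
noncomputable def transmission {V : Type*} [Fintype V] (G : SimpleGraph V) (u : V) : ℕ :=
  ∑ v, G.dist u v

/-- The transmission σ(G): sum of distances over all unordered pairs. -/
noncomputable def transmissionOf {V : Type*} [Fintype V] (G : SimpleGraph V) : ℝ :=
  (1 / 2) * ∑ u, ∑ v, (G.dist u v : ℝ)

/-- The distance signless Laplacian matrix Q_D(G) = Tr(G) + 𝒟(G). -/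
noncomputable def distSignlessLaplacian {V : Type*} [Fintype V] [DecidableEq V]
    (G : SimpleGraph V) : Matrix V V ℝ :=
  fun u v => (if u = v then (transmission G u : ℝ) else 0) + (G.dist u v : ℝ)

/-- `ρ` is the distance signless Laplacian spectral radius of `G`,
i.e. the largest eigenvalue of `Q_D(G)`. -/
noncomputable def IsDistSLSpectralRadius {V : Type*} [Fintype V] [DecidableEq V]
    (G : SimpleGraph V) (ρ : ℝ) : Prop :=
  IsGreatest {μ : ℝ | Module.End.HasEigenvalue (Matrix.toLin' (distSignlessLaplacian G)) μ} ρ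

/-- Join of two graphs. -/
def joinGraph {α β : Type*} (G : SimpleGraph α) (H : SimpleGraph β) : SimpleGraph (α ⊕ β) :=
  SimpleGraph.fromRel (fun x y =>
    match x, y with
    | Sum.inl a, Sum.inl b => G.Adj a b
    | Sum.inr a, Sum.inr b => H.Adj a b
    | Sum.inl _, Sum.inr _ => True
    | Sum.inr _, Sum.inl _ => False)

/-- The graph H_{t,n-t}. -/
def HGraph (n t : ℕ) : SimpleGraph (Fin n ⊕ Fin n) :=
  SimpleGraph.fromRel (fun x y =>
    match x, y with
    | Sum.inl i, Sum.inr j => (j : ℕ) < n - t ∨ (i : ℕ) < t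
    | _, _ => False)

/-- Hamilton-connected. -/
def IsHamiltonianConnected {V : Type*} [DecidableEq V] (G : SimpleGraph V) : Prop :=
  ∀ u v : V, u ≠ v → ∃ p : G.Walk u v, p.IsHamiltonian

/-- Traceable from every vertex. -/
def TraceableFromEveryVertex {V : Type*} [DecidableEq V] (G : SimpleGraph V) : Prop :=
  ∀ u : V, ∃ v : V, ∃ p : G.Walk u v, p.IsHamiltonian

/-- K_{n-1} + e : complete graph on n-1 vertices with a pendant edge. -/
def KPlusPendant (n : ℕ) : SimpleGraph (Fin (n - 1) ⊕ Fin 1) :=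
  SimpleGraph.fromRel (fun x y =>
    match x, y with
    | Sum.inl a, Sum.inl b => a ≠ b
    | Sum.inl a, Sum.inr _ => (a : ℕ) = 0
    | _, _ => False)

lemma rayleigh_le_rho {k : Type*} [Fintype k] [DecidableEq k] [Nonempty k]
    (M : Matrix k k ℝ) (hM : M.IsHermitian) (ρ : ℝ)
    (hρ : IsGreatest {μ : ℝ | Module.End.HasEigenvalue (Matrix.toLin' M) μ} ρ)
    (x : k → ℝ) (hx : x ≠ 0) :
    (∑ i, (∑ j, M i j * x j) * x i) / (∑ i, x i ^ 2) ≤ ρ := by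
  classical
  set T : EuclideanSpace ℝ k →ₗ[ℝ] EuclideanSpace ℝ k := Matrix.toEuclideanLin M with hTdef
  have hsym : T.IsSymmetric := Matrix.isHermitian_iff_isSymmetric.1 hM
  haveI : Nontrivial (EuclideanSpace ℝ k) := by
    refine ⟨(WithLp.equiv 2 _).symm 0, (WithLp.equiv 2 _).symm (fun _ => 1), ?_⟩
    intro h
    have := congrArg (fun f => WithLp.equiv 2 (k → ℝ) f (Classical.arbitrary k)) h
    simpa using this
  set μ : ℝ := (⨆ y : { y : EuclideanSpace ℝ k // y ≠ 0 }, RCLike.re (inner ℝ (T y) (y : EuclideanSpace ℝ k) : ℝ) / ‖(y : EuclideanSpace ℝ k)‖ ^ 2 : ℝ)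
    with hμdef
  have heig : Module.End.HasEigenvalue T μ := hsym.hasEigenvalue_iSup_of_finiteDimensional
  -- transfer eigenvalue to toLin'
  have heig' : Module.End.HasEigenvalue (Matrix.toLin' M) μ := by
    obtain ⟨v, hv⟩ := heig.exists_hasEigenvector
    refine Module.End.hasEigenvalue_of_hasEigenvector (x := WithLp.equiv 2 (k → ℝ) v) ⟨?_, ?_⟩
    · rw [Module.End.mem_eigenspace_iff]
      have := hv.apply_eq_smul
      have h2 := congrArg (WithLp.equiv 2 (k → ℝ)) this
      simpa [hTdef, Matrix.toEuclideanLin_apply] using h2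
    · simpa using hv.2
  have hμρ : μ ≤ ρ := hρ.2 heig'
  -- bound the Rayleigh quotient of x by μ
  set x₀ : EuclideanSpace ℝ k := (WithLp.equiv 2 (k → ℝ)).symm x with hx₀def
  have hx₀ : x₀ ≠ 0 := by simpa [hx₀def] using hx
  have hbdd : BddAbove (Set.range fun y : { y : EuclideanSpace ℝ k // y ≠ 0 } =>
      RCLike.re (inner ℝ (T y) (y : EuclideanSpace ℝ k) : ℝ) / ‖(y : EuclideanSpace ℝ k)‖ ^ 2) := by
    refine ⟨‖LinearMap.toContinuousLinearMap T‖, ?_⟩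
    rintro r ⟨y, rfl⟩
    have hy : (0:ℝ) < ‖(y : EuclideanSpace ℝ k)‖ := norm_pos_iff.2 y.2
    rw [div_le_iff₀ (by positivity)]
    calc RCLike.re (inner ℝ (T y) (y : EuclideanSpace ℝ k) : ℝ) ≤ ‖(inner ℝ (T y) (y : EuclideanSpace ℝ k) : ℝ)‖ :=
          le_abs_self _
      _ ≤ ‖T y‖ * ‖(y:EuclideanSpace ℝ k)‖ := norm_inner_le_norm _ _
      _ ≤ ‖LinearMap.toContinuousLinearMap T‖ * ‖(y:EuclideanSpace ℝ k)‖ * ‖(y:EuclideanSpace ℝ k)‖ := by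
          have h1 := (LinearMap.toContinuousLinearMap T).le_opNorm (y : EuclideanSpace ℝ k)
          rw [LinearMap.coe_toContinuousLinearMap'] at h1
          nlinarith [norm_nonneg (T (y:EuclideanSpace ℝ k))]
      _ = ‖LinearMap.toContinuousLinearMap T‖ * ‖(y:EuclideanSpace ℝ k)‖ ^ 2 := by ring
  have hle : RCLike.re (inner ℝ (T x₀) (x₀ : EuclideanSpace ℝ k) : ℝ) / ‖x₀‖ ^ 2 ≤ μ :=
    le_ciSup hbdd ⟨x₀, hx₀⟩
  -- identify the Rayleigh quotient
  have hnum : RCLike.re (inner ℝ (T x₀) (x₀ : EuclideanSpace ℝ k) : ℝ) = ∑ i, (∑ j, M i j * x j) * x i := by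
    simp only [RCLike.re_to_real]
    rw [hx₀def, hTdef, Matrix.toEuclideanLin_apply_piLp_toLp]
    simp [PiLp.inner_apply, Matrix.mulVec, dotProduct, mul_comm]
  have hden : ‖x₀‖ ^ 2 = ∑ i, x i ^ 2 := by
    rw [hx₀def, EuclideanSpace.norm_eq, Real.sq_sqrt (by positivity)]
    simp [sq]
  rw [hnum, hden] at hle
  exact hle.trans hμρ

lemma dist_eq_two' {V : Type*} {G : SimpleGraph V} {u v w : V} (hne : u ≠ v)
    (h1 : ¬ G.Adj u v) (ha : G.Adj u w) (hb : G.Adj w v) : G.dist u v = 2 := by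
  have hle : G.dist u v ≤ 2 := by
    have := SimpleGraph.dist_le (SimpleGraph.Walk.cons ha (SimpleGraph.Walk.cons hb
      SimpleGraph.Walk.nil))
    simpa using this
  have h0 : G.dist u v ≠ 0 := by
    rw [Ne, SimpleGraph.dist_eq_zero_iff_eq_or_not_reachable]
    push_neg
    exact ⟨hne, (SimpleGraph.Walk.cons ha (SimpleGraph.Walk.cons hb
      SimpleGraph.Walk.nil)).reachable⟩
  have h1' : G.dist u v ≠ 1 := fun h => h1 (SimpleGraph.dist_eq_one_iff_adj.1 h)
  omega

section graphsec
variable (n : ℕ)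

local notation "Vn" => (Fin 2 ⊕ (Fin (n-4) ⊕ Fin 2))

/-- explicit distance function -/
noncomputable def dfun : Vn → Vn → ℝ
  | Sum.inl a, Sum.inl b => if a = b then 0 else 1
  | Sum.inl _, Sum.inr _ => 1
  | Sum.inr _, Sum.inl _ => 1
  | Sum.inr (Sum.inl a), Sum.inr (Sum.inl b) => if a = b then 0 else 1
  | Sum.inr (Sum.inl _), Sum.inr (Sum.inr _) => 2
  | Sum.inr (Sum.inr _), Sum.inr (Sum.inl _) => 2
  | Sum.inr (Sum.inr a), Sum.inr (Sum.inr b) => if a = b then 0 else 2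

lemma dist_eq_dfun (u v : Vn) :
    ((joinGraph (⊤ : SimpleGraph (Fin 2))
      ((⊤ : SimpleGraph (Fin (n - 4))) ⊕g (⊥ : SimpleGraph (Fin 2)))).dist u v : ℝ)
      = dfun n u v := by
  set G := joinGraph (⊤ : SimpleGraph (Fin 2))
      ((⊤ : SimpleGraph (Fin (n - 4))) ⊕g (⊥ : SimpleGraph (Fin 2))) with hG
  have hadj_lr : ∀ (a : Fin 2) (w : Fin (n-4) ⊕ Fin 2), G.Adj (Sum.inl a) (Sum.inr w) := by
    intro a w
    simp [hG, joinGraph, SimpleGraph.fromRel_adj]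
  have hadj_ll : ∀ (a b : Fin 2), a ≠ b → G.Adj (Sum.inl a) (Sum.inl b) := by
    intro a b h
    simp [hG, joinGraph, SimpleGraph.fromRel_adj, h]
  have hadj_bb : ∀ (a b : Fin (n-4)), a ≠ b →
      G.Adj (Sum.inr (Sum.inl a)) (Sum.inr (Sum.inl b)) := by
    intro a b h
    simp [hG, joinGraph, SimpleGraph.fromRel_adj, h]
  have hnadj_bc : ∀ (a : Fin (n-4)) (b : Fin 2),
      ¬ G.Adj (Sum.inr (Sum.inl a)) (Sum.inr (Sum.inr b)) := by
    intro a b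
    simp [hG, joinGraph, SimpleGraph.fromRel_adj]
  have hnadj_cb : ∀ (a : Fin 2) (b : Fin (n-4)),
      ¬ G.Adj (Sum.inr (Sum.inr a)) (Sum.inr (Sum.inl b)) := by
    intro a b
    simp [hG, joinGraph, SimpleGraph.fromRel_adj]
  have hnadj_cc : ∀ (a b : Fin 2),
      ¬ G.Adj (Sum.inr (Sum.inr a)) (Sum.inr (Sum.inr b)) := by
    intro a b
    simp [hG, joinGraph, SimpleGraph.fromRel_adj]
  match u, v with
  | Sum.inl a, Sum.inl b =>
    by_cases h : a = b
    · subst h; simp [dfun]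
    · rw [SimpleGraph.dist_eq_one_iff_adj.2 (hadj_ll a b h)]; simp [dfun, h]
  | Sum.inl a, Sum.inr w =>
    rw [SimpleGraph.dist_eq_one_iff_adj.2 (hadj_lr a w)]; cases w <;> simp [dfun]
  | Sum.inr w, Sum.inl a =>
    rw [SimpleGraph.dist_eq_one_iff_adj.2 (hadj_lr a w).symm]; cases w <;> simp [dfun]
  | Sum.inr (Sum.inl a), Sum.inr (Sum.inl b) =>
    by_cases h : a = b
    · subst h; simp [dfun]
    · rw [SimpleGraph.dist_eq_one_iff_adj.2 (hadj_bb a b h)]; simp [dfun, h]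
  | Sum.inr (Sum.inl a), Sum.inr (Sum.inr b) =>
    rw [dist_eq_two' (by simp) (hnadj_bc a b) ((hadj_lr 0 (Sum.inl a)).symm)
      (hadj_lr 0 (Sum.inr b))]
    simp [dfun]
  | Sum.inr (Sum.inr a), Sum.inr (Sum.inl b) =>
    rw [dist_eq_two' (by simp) (hnadj_cb a b) ((hadj_lr 0 (Sum.inr a)).symm)
      (hadj_lr 0 (Sum.inl b))]
    simp [dfun]
  | Sum.inr (Sum.inr a), Sum.inr (Sum.inr b) =>
    by_cases h : a = b
    · subst h; simp [dfun]
    · rw [dist_eq_two' (by simp [h]) (hnadj_cc a b) ((hadj_lr 0 (Sum.inr a)).symm)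
        (hadj_lr 0 (Sum.inr b))]
      simp [dfun, h]

end graphsec

lemma sum_ite_ne {N : ℕ} (b : Fin N) (c : ℝ) :
    ∑ a : Fin N, (if b = a then (0:ℝ) else c) = (N:ℝ)*c - c := by
  have h : ∀ a : Fin N, (if b = a then (0:ℝ) else c) = c - (if b = a then c else 0) :=
    fun a => by split <;> ring
  simp only [h, Finset.sum_sub_distrib, Finset.sum_const, Finset.sum_ite_eq,
    Finset.card_univ, Fintype.card_fin, Finset.mem_univ, if_true, smul_eq_mul]
  ring

lemma sum_V {α β γ : Type*} [Fintype α] [Fintype β] [Fintype γ] (f : α ⊕ (β ⊕ γ) → ℝ) :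
    ∑ v, f v = (∑ a, f (Sum.inl a)) + ((∑ b, f (Sum.inr (Sum.inl b)))
      + ∑ c, f (Sum.inr (Sum.inr c))) := by
  rw [Fintype.sum_sum_type]
  congr 1
  rw [Fintype.sum_sum_type]

/-- For G = K₂ ∨ (K_{n-4} + 2K₁) on n ≥ 5 vertices, ρ_D(G) > (2n² + 6n - 28)/n. -/
theorem stmt_15 (n : ℕ) (hn : 5 ≤ n) (ρ : ℝ)
    (hρ : IsDistSLSpectralRadius (joinGraph (⊤ : SimpleGraph (Fin 2))
      ((⊤ : SimpleGraph (Fin (n - 4))) ⊕g (⊥ : SimpleGraph (Fin 2)))) ρ) :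
    (2 * (n : ℝ) ^ 2 + 6 * (n : ℝ) - 28) / (n : ℝ) < ρ := by
  classical
  set G := joinGraph (⊤ : SimpleGraph (Fin 2))
      ((⊤ : SimpleGraph (Fin (n - 4))) ⊕g (⊥ : SimpleGraph (Fin 2))) with hG
  set Q := distSignlessLaplacian G with hQ
  set m : ℝ := ((n - 4 : ℕ) : ℝ) with hm
  have hmn : m = (n : ℝ) - 4 := by
    rw [hm, Nat.cast_sub (by omega : 4 ≤ n)]; norm_num
  -- the matrix is Hermitian
  have hM : Q.IsHermitian := by
    show Q.conjTranspose = Q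
    ext i j
    simp only [Matrix.conjTranspose_apply, hQ, distSignlessLaplacian, star_trivial]
    rw [SimpleGraph.dist_comm]
    by_cases h : i = j
    · subst h; rfl
    · rw [if_neg h, if_neg (fun hh => h hh.symm)]
  -- the test vector
  set x : (Fin 2 ⊕ (Fin (n-4) ⊕ Fin 2)) → ℝ :=
    Sum.elim (fun _ => 1) (Sum.elim (fun _ => 1) (fun _ => 2)) with hx
  have hx0 : x ≠ 0 := by
    intro h
    have := congrFun h (Sum.inl 0)
    simp [hx] at this
  have key := rayleigh_le_rho Q hM ρ hρ x hx0
  -- matrix entries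
  have hQapp : ∀ u v, Q u v = (if u = v then (transmission G u : ℝ) else 0) + dfun n u v := by
    intro u v
    show (if u = v then (transmission G u : ℝ) else 0) + (G.dist u v : ℝ) = _
    rw [dist_eq_dfun]
  -- transmissions
  have htr : ∀ u, (transmission G u : ℝ) = ∑ v, dfun n u v := by
    intro u
    rw [transmission]
    push_cast
    exact Finset.sum_congr rfl fun v _ => dist_eq_dfun n u v
  have htrA : ∀ a : Fin 2, (transmission G (Sum.inl a) : ℝ) = m + 3 := by
    intro a
    rw [htr, sum_V]
    simp only [dfun]
    rw [sum_ite_ne]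
    simp [hm]
    ring
  have htrB : ∀ b : Fin (n-4), (transmission G (Sum.inr (Sum.inl b)) : ℝ) = m + 5 := by
    intro b
    rw [htr, sum_V]
    simp only [dfun]
    rw [sum_ite_ne]
    simp [hm]
    ring
  have htrC : ∀ c : Fin 2, (transmission G (Sum.inr (Sum.inr c)) : ℝ) = 2*m + 4 := by
    intro c
    rw [htr, sum_V]
    simp only [dfun]
    rw [sum_ite_ne]
    simp [hm]
    ring
  -- row sums against x
  have hsplit : ∀ u, ∑ v, Q u v * x v
      = (transmission G u : ℝ) * x u + ∑ v, dfun n u v * x v := by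
    intro u
    simp only [hQapp, add_mul, Finset.sum_add_distrib]
    congr 1
    simp only [ite_mul, zero_mul]
    rw [Finset.sum_ite_eq]
    simp
  have hrowA : ∀ a : Fin 2, ∑ v, Q (Sum.inl a) v * x v = 2*m + 8 := by
    intro a
    rw [hsplit, htrA, sum_V]
    simp only [dfun, hx, Sum.elim_inl, Sum.elim_inr, mul_one, ite_mul, zero_mul, one_mul]
    rw [sum_ite_ne]
    simp [hm]
    ring
  have hrowB : ∀ b : Fin (n-4), ∑ v, Q (Sum.inr (Sum.inl b)) v * x v = 2*m + 14 := by
    intro b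
    rw [hsplit, htrB, sum_V]
    simp only [dfun, hx, Sum.elim_inl, Sum.elim_inr, mul_one, ite_mul, zero_mul, one_mul]
    rw [sum_ite_ne]
    simp [hm]
    ring
  have hrowC : ∀ c : Fin 2, ∑ v, Q (Sum.inr (Sum.inr c)) v * x v = 6*m + 14 := by
    intro c
    rw [hsplit, htrC, sum_V]
    simp only [dfun, hx, Sum.elim_inl, Sum.elim_inr, mul_one, ite_mul, zero_mul, one_mul]
    rw [sum_ite_ne]
    simp [hm]
    ring
  -- numerator and denominator
  have hnum : ∑ i, (∑ j, Q i j * x j) * x i = 2*m^2 + 42*m + 72 := by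
    rw [sum_V]
    simp only [hrowA, hrowB, hrowC]
    simp only [hx, Sum.elim_inl, Sum.elim_inr, mul_one]
    simp [hm]
    ring
  have hden : ∑ i, x i ^ 2 = m + 10 := by
    rw [sum_V]
    simp [hx, hm]
    ring
  rw [hnum, hden] at key
  refine lt_of_lt_of_le ?_ key
  have hn5 : (5:ℝ) ≤ (n:ℝ) := by exact_mod_cast hn
  rw [div_lt_div_iff₀ (by linarith) (by rw [hmn]; linarith)]
  rw [hmn]
  nlinarith [sq_nonneg ((n:ℝ) - 5)]
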